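/- arXiv:1908.04867 — 3 statements merged into one kernel-verified Lean document; each statement's English description precedes it below -/
import Mathlib

section
/- Let p, d, l, a, φ be real numbers with φ ≠ 1 and l ≠ 0. Then δ = a / ((1 − φ)·l) is the unique real number satisfying the insurer's indifference equation φ·(p − d − l − a) + (1 − φ)·(δ·(p − d − a) + (1 − δ)·(p − l − a)) = φ·(p − d − l) + (1 − φ)·(δ·(p − d − l) + (1 − δ)·(p − l)). -/
/-- The equilibrium claiming probability `δ = a / ((1 − φ)·l)` is the
unique real number making the insurer indifferent between auditing and not
auditing a breached discount claim. -/
theorem claiming_probability_unique_solution_of_indifference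
    (p d l a φ : ℝ) (hφ : φ ≠ 1) (hl : l ≠ 0) :
    ∀ δ : ℝ,
      (φ * (p - d - l - a)
        + (1 - φ) * (δ * (p - d - a) + (1 - δ) * (p - l - a))
       = φ * (p - d - l)
        + (1 - φ) * (δ * (p - d - l) + (1 - δ) * (p - l)))
      ↔ δ = a / ((1 - φ) * l) := by
  intro δ
  have h1 : (1 - φ) ≠ 0 := sub_ne_zero.mpr (Ne.symm hφ)
  have h2 : (1 - φ) * l ≠ 0 := mul_ne_zero h1 hl
  rw [eq_div_iff h2]
  constructor <;> intro h <;> nlinarith [h]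
end

section
/- Let U : ℝ → ℝ be strictly monotone increasing and let W, p, d, l, β be real numbers with l > 0 and β > 0, and set θ* := (U(W − p + d) − U(W − p)) / (β·(U(W − p + d) − U(W − p + d − l))). Then for every real θ, the non-investing policyholder's expected utility from claiming the discount exceeds that from not claiming, i.e. β·θ·U(W − p + d − l) + β·(1 − θ)·U(W − p + d) + (1 − β)·U(W − p + d) > U(W − p), if and only if θ < θ*. (The non-investing policyholder strictly prefers to claim the discount exactly when the insurer's audit probability is below the equilibrium threshold θ*.) -/
/-- The non-investing policyholder strictly prefers to claim the
discount iff the insurer's audit probability `θ` is below the equilibrium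
threshold `θ*`. -/
theorem claim_preferred_iff_audit_below_threshold
    (U : ℝ → ℝ) (hU : StrictMono U)
    (W p d l β : ℝ) (hl : l > 0) (hβ : β > 0) :
    ∀ θ : ℝ,
      (β * θ * U (W - p + d - l) + β * (1 - θ) * U (W - p + d)
        + (1 - β) * U (W - p + d) > U (W - p))
      ↔ θ < (U (W - p + d) - U (W - p))
              / (β * (U (W - p + d) - U (W - p + d - l))) := by
  intro θ
  have hAB : U (W - p + d - l) < U (W - p + d) := hU (by linarith)
  have hden : 0 < β * (U (W - p + d) - U (W - p + d - l)) := by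
    have := hAB; nlinarith
  rw [lt_div_iff₀ hden]
  constructor <;> intro h <;> nlinarith
end

section
/- Let p, d, l, a, φ, δ be real numbers with φ < 1 and l > 0. Then the insurer's expected payoff from auditing a breached discount claim exceeds her expected payoff from not auditing, i.e. φ·(p − d − l − a) + (1 − φ)·(δ·(p − d − a) + (1 − δ)·(p − l − a)) > φ·(p − d − l) + (1 − φ)·(δ·(p − d − l) + (1 − δ)·(p − l)), if and only if δ > a / ((1 − φ)·l). (Auditing is strictly preferred exactly when the non-investing policyholder claims the discount with probability above the equilibrium threshold.) -/
/-- Upon a breach, the insurer strictly prefers auditing a discount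
claim iff the non-investing policyholder claims with probability
`δ > a / ((1 − φ)·l)`. -/
theorem audit_preferred_iff_claiming_above_threshold
    (p d l a φ δ : ℝ) (hφ : φ < 1) (hl : l > 0) :
    (φ * (p - d - l - a)
      + (1 - φ) * (δ * (p - d - a) + (1 - δ) * (p - l - a))
     > φ * (p - d - l)
      + (1 - φ) * (δ * (p - d - l) + (1 - δ) * (p - l)))
    ↔ δ > a / ((1 - φ) * l) := by
  have hpos : (0:ℝ) < (1 - φ) * l := mul_pos (by linarith) hl
  simp only [gt_iff_lt, div_lt_iff₀ hpos]
  constructor <;> intro h <;> nlinarith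
end
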